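/- For every integer m ≥ 1, the following identity holds in the polynomial ring ℚ[a,b]: ∑_{r=0}^{m−1} ( binom(m,r) · B_r / (m·(m−r+1)) ) · a^r · ((a+b)^{m−r+1} − b^{m−r+1}) = −(B_m/m)·a^{m+1} + (1/m)·a·b^m. -/

import Mathlib

open Finset MvPolynomial

lemma bern_homog (n : ℕ) (a x : ℚ) (ha : a ≠ 0) :
    a ^ n * (Polynomial.bernoulli n).eval (x / a)
      = ∑ i ∈ range (n + 1), bernoulli i * (n.choose i : ℚ) * a ^ i * x ^ (n - i) := by
  rw [Polynomial.bernoulli, Polynomial.eval_finset_sum, Finset.mul_sum]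
  refine Finset.sum_congr rfl fun i hi => ?_
  rw [Finset.mem_range] at hi
  rw [Polynomial.eval_monomial, div_pow]
  have h : a ^ n = a ^ i * a ^ (n - i) := by rw [← pow_add]; congr 1; omega
  rw [h]
  field_simp

lemma key (m : ℕ) (hm : 1 ≤ m) (a b : ℚ) :
    ∑ r ∈ Finset.range m,
        (m.choose r : ℚ) * bernoulli r / ((m : ℚ) * ((m : ℚ) - (r : ℚ) + 1)) * a ^ r *
          ((a + b) ^ (m - r + 1) - b ^ (m - r + 1))
      = -(bernoulli m / (m : ℚ)) * a ^ (m + 1) + 1 / (m : ℚ) * a * b ^ m := by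
  have hm0 : (m : ℚ) ≠ 0 := Nat.cast_ne_zero.mpr (by omega)
  rcases eq_or_ne a 0 with rfl | ha
  · have hz : ∑ r ∈ Finset.range m,
        (m.choose r : ℚ) * bernoulli r / ((m : ℚ) * ((m : ℚ) - (r : ℚ) + 1)) * (0:ℚ) ^ r *
          ((0 + b) ^ (m - r + 1) - b ^ (m - r + 1)) = 0 := by
      refine Finset.sum_eq_zero fun r hr => ?_
      rcases r with _ | r
      · simp
      · simp [zero_pow]
    rw [hz, zero_pow (by omega : m + 1 ≠ 0)]
    ring
  have hm1 : ((m : ℚ) + 1) ≠ 0 := by positivity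
  have step1 : ∀ r ∈ Finset.range m,
      (m.choose r : ℚ) * bernoulli r / ((m : ℚ) * ((m : ℚ) - (r : ℚ) + 1)) * a ^ r *
          ((a + b) ^ (m - r + 1) - b ^ (m - r + 1))
        = 1 / ((m : ℚ) * ((m : ℚ) + 1)) *
          (bernoulli r * ((m + 1).choose r : ℚ) * a ^ r *
            ((a + b) ^ (m + 1 - r) - b ^ (m + 1 - r))) := by
    intro r hr
    rw [Finset.mem_range] at hr
    have hch : (m.choose r : ℚ) * ((m : ℚ) + 1) = ((m + 1).choose r : ℚ) * ((m : ℚ) - r + 1) := by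
      have h := Nat.choose_mul_succ_eq m r
      have hcast : ((m.choose r : ℚ)) * ((m : ℚ) + 1)
          = ((m + 1).choose r : ℚ) * (((m + 1 - r : ℕ) : ℚ)) := by exact_mod_cast congrArg (Nat.cast : ℕ → ℚ) h
      rw [hcast, Nat.cast_sub (by omega : r ≤ m + 1)]
      push_cast
      ring
    have hr1 : ((m : ℚ) - r + 1) ≠ 0 := by
      have : (r : ℚ) < m := by exact_mod_cast hr
      intro hc; nlinarith
    have he : m - r + 1 = m + 1 - r := by omega
    rw [he]
    have hco : (m.choose r : ℚ) * bernoulli r / ((m : ℚ) * ((m : ℚ) - (r : ℚ) + 1))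
        = 1 / ((m : ℚ) * ((m : ℚ) + 1)) * (bernoulli r * ((m + 1).choose r : ℚ)) := by
      field_simp
      linear_combination (bernoulli r) * hch
    rw [div_mul_eq_mul_div, div_mul_eq_mul_div, div_mul_eq_mul_div, ← div_mul_eq_mul_div,
      ← div_mul_eq_mul_div, hco]
    ring
  rw [Finset.sum_congr rfl step1, ← Finset.mul_sum]
  set T := ∑ r ∈ range m, bernoulli r * ((m + 1).choose r : ℚ) * a ^ r *
      ((a + b) ^ (m + 1 - r) - b ^ (m + 1 - r)) with hTdef
  have hfull : ∑ i ∈ range (m + 2), bernoulli i * ((m + 1).choose i : ℚ) * a ^ i *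
        ((a + b) ^ (m + 1 - i) - b ^ (m + 1 - i))
      = T + ((m : ℚ) + 1) * bernoulli m * a ^ (m + 1) := by
    rw [show m + 2 = (m + 1) + 1 from rfl, Finset.sum_range_succ, Finset.sum_range_succ]
    rw [Nat.sub_self, Nat.choose_succ_self_right]
    have h1 : m + 1 - m = 1 := by omega
    rw [h1]
    push_cast
    ring
  have hsplit : ∑ i ∈ range (m + 2), bernoulli i * ((m + 1).choose i : ℚ) * a ^ i *
        ((a + b) ^ (m + 1 - i) - b ^ (m + 1 - i))
      = a ^ (m + 1) * (((m : ℚ) + 1) * (b / a) ^ m) := by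
    have h1 := bern_homog (m + 1) a (a + b) ha
    have h2 := bern_homog (m + 1) a b ha
    have : ∑ i ∈ range (m + 2), bernoulli i * ((m + 1).choose i : ℚ) * a ^ i *
          ((a + b) ^ (m + 1 - i) - b ^ (m + 1 - i))
        = (∑ i ∈ range (m + 2), bernoulli i * ((m + 1).choose i : ℚ) * a ^ i * (a + b) ^ (m + 1 - i))
          - ∑ i ∈ range (m + 2), bernoulli i * ((m + 1).choose i : ℚ) * a ^ i * b ^ (m + 1 - i) := by
      rw [← Finset.sum_sub_distrib]
      exact Finset.sum_congr rfl fun i _ => by ring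
    rw [this, ← h1, ← h2, ← mul_sub]
    congr 1
    have hab : (a + b) / a = 1 + b / a := by field_simp
    rw [hab, Polynomial.bernoulli_eval_one_add]
    push_cast
    ring_nf
  have habm : a ^ (m + 1) * (b / a) ^ m = a * b ^ m := by
    rw [div_pow, pow_succ]
    field_simp
  have hT : T = a ^ (m + 1) * (((m : ℚ) + 1) * (b / a) ^ m)
      - ((m : ℚ) + 1) * bernoulli m * a ^ (m + 1) := by linarith [hfull, hsplit]
  have h2 : a ^ (m + 1) * (((m : ℚ) + 1) * (b / a) ^ m) = ((m : ℚ) + 1) * (a * b ^ m) := by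
    linear_combination ((m : ℚ) + 1) * habm
  rw [hT, h2]
  field_simp
  ring

theorem stmt_12 (m : ℕ) (hm : 1 ≤ m) :
    (∑ r ∈ Finset.range m,
        MvPolynomial.C ((m.choose r : ℚ) * bernoulli r / ((m : ℚ) * ((m : ℚ) - (r : ℚ) + 1))) *
          (MvPolynomial.X 0 : MvPolynomial (Fin 2) ℚ) ^ r *
          ((MvPolynomial.X 0 + MvPolynomial.X 1) ^ (m - r + 1) -
            (MvPolynomial.X 1) ^ (m - r + 1)))
      = MvPolynomial.C (-(bernoulli m / (m : ℚ))) *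
            (MvPolynomial.X 0 : MvPolynomial (Fin 2) ℚ) ^ (m + 1)
          + MvPolynomial.C (1 / (m : ℚ)) * (MvPolynomial.X 0) * (MvPolynomial.X 1) ^ m := by
  apply MvPolynomial.funext
  intro x
  simp only [map_sum, eval_mul, eval_sub, eval_add, eval_pow, eval_C, eval_X]
  exact key m hm (x 0) (x 1)
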